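/- Let T be a finite system with inputs I and outputs O, let π be a trace of T, let E ⊆ (ℕ → Set I × Set O) be an effect, and suppose C ⊆ (ℕ → Set I) is a cause of E on π in T with respect to the subset similarity relation. If E is a recurrence property, then C is a recurrence property. -/

import Mathlib

/-- The prefix of length `n` of the infinite word `π`, i.e. the list `[π 0, …, π (n-1)]`. -/
def wordPrefix {A : Type*} (π : ℕ → A) (n : ℕ) : List A := (List.range n).map π

/-- The set of prefixes of length `n` of words in `L`. -/
def prefN {A : Type*} (L : Set (ℕ → A)) (n : ℕ) : Set (List A) :=
  (fun π => wordPrefix π n) '' L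

/-- The set of all prefixes of words in `L`. -/
def prefAll {A : Type*} (L : Set (ℕ → A)) : Set (List A) := ⋃ n, prefN L n

/-- The set of all prefixes of the single word `π`. -/
def prefWord {A : Type*} (π : ℕ → A) : Set (List A) := {w | ∃ n, w = wordPrefix π n}

/-- `f` is prefix-continuous. -/
def PrefixContinuous {A B : Type*} (f : (ℕ → A) → Set (ℕ → B)) : Prop :=
  ∀ (n : ℕ) (π : ℕ → A), ∃ m : ℕ, ∀ π' : ℕ → A,
    wordPrefix π' m = wordPrefix π m → prefN (f π) n = prefN (f π') n

/-- `f` is prefix-closed. -/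
def PrefixClosed {A B : Type*} (f : (ℕ → A) → Set (ℕ → B)) : Prop :=
  ∀ (π : ℕ → A) (σ : ℕ → B), prefWord σ ⊆ prefAll (f π) → σ ∈ f π

/-- `f` is prefix-compact. -/
def PrefixCompact {A B : Type*} (f : (ℕ → A) → Set (ℕ → B)) : Prop :=
  ∀ (n : ℕ) (π : ℕ → A), (prefN (f π) n).Finite

/-- The universal preimage of `S` under `f`. -/
def univPreimage {A B : Type*} (f : (ℕ → A) → Set (ℕ → B)) (S : Set (ℕ → B)) :
    Set (ℕ → A) := {π | f π ⊆ S}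

/-- The existential preimage of `S` under `f`. -/
def existPreimage {A B : Type*} (f : (ℕ → A) → Set (ℕ → B)) (S : Set (ℕ → B)) :
    Set (ℕ → A) := {π | (f π ∩ S).Nonempty}

/-- `L` is a safety property. -/
def IsSafetyProperty {B : Type*} (L : Set (ℕ → B)) : Prop :=
  ∃ Φ : Set (List B), L = {π | ∀ n : ℕ, wordPrefix π n ∈ Φ}

/-- `L` is a guarantee property. -/
def IsGuaranteeProperty {B : Type*} (L : Set (ℕ → B)) : Prop :=
  ∃ Φ : Set (List B), L = {π | ∃ n : ℕ, wordPrefix π n ∈ Φ}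

/-- `L` is a recurrence property. -/
def IsRecurrenceProperty {B : Type*} (L : Set (ℕ → B)) : Prop :=
  ∃ Φ : Set (List B), L = {π | {n : ℕ | wordPrefix π n ∈ Φ}.Infinite}

/-- `L` is a persistence property. -/
def IsPersistenceProperty {B : Type*} (L : Set (ℕ → B)) : Prop :=
  ∃ Φ : Set (List B), L = {π | {n : ℕ | wordPrefix π n ∈ Φ}.Finite}

/-- A (finite-state) reactive system with states `S`, inputs `I` and outputs `O`. -/
structure FinSystem (S I O : Type*) where
  init : S
  tr : S → Set I → Set S
  lab : S → Set O

/-- `π` is a trace of the system `T`. -/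
def IsTrace {S I O : Type*} (T : FinSystem S I O) (π : ℕ → Set I × Set O) : Prop :=
  ∃ s : ℕ → S, s 0 = T.init ∧
    ∀ n : ℕ, s (n + 1) ∈ T.tr (s n) (π n).1 ∧ (π n).2 = T.lab (s (n + 1))

/-- The input component of a trace. -/
def traceInputs {I O : Type*} (π : ℕ → Set I × Set O) : ℕ → Set I := fun n => (π n).1

/-- The subset similarity relation relative to the observed trace `π`:
`σ` is at least as similar to `π` as the input sequence `ρ`. -/
def SubsetSim {I O : Type*} (π σ : ℕ → Set I × Set O) (ρ : ℕ → Set I) : Prop :=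
  ∀ (n : ℕ) (i : I), ((i ∈ (σ n).1) ≠ (i ∈ (π n).1)) → ((i ∈ ρ n) ≠ (i ∈ (π n).1))

/-- The SAT condition. -/
def SatCond {S I O : Type*} (T : FinSystem S I O) (π : ℕ → Set I × Set O)
    (E : Set (ℕ → Set I × Set O)) (C : Set (ℕ → Set I)) : Prop :=
  ∀ π' : ℕ → Set I × Set O, IsTrace T π' → traceInputs π' = traceInputs π →
    traceInputs π' ∈ C ∧ π' ∈ E

/-- The CF condition. -/
def CfCond {S I O : Type*} (T : FinSystem S I O) (π : ℕ → Set I × Set O)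
    (E : Set (ℕ → Set I × Set O)) (C : Set (ℕ → Set I)) : Prop :=
  ∀ ρ : ℕ → Set I, ρ ∉ C → ∃ σ : ℕ → Set I × Set O,
    IsTrace T σ ∧ SubsetSim π σ ρ ∧ σ ∉ E

/-- `C` is a cause of the effect `E` on the trace `π` in the system `T`,
with respect to the subset similarity relation. -/
def IsCause {S I O : Type*} (T : FinSystem S I O) (π : ℕ → Set I × Set O)
    (E : Set (ℕ → Set I × Set O)) (C : Set (ℕ → Set I)) : Prop :=
  SatCond T π E C ∧ CfCond T π E C ∧
    ¬ ∃ C' : Set (ℕ → Set I), C' ⊂ C ∧ SatCond T π E C' ∧ CfCond T π E C'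

/-! ### Auxiliary material for `cause_recurrence` -/

section Aux

/-- Congruence for `wordPrefix`. -/
lemma wordPrefix_congr {A : Type*} {f g : ℕ → A} (m : ℕ) (h : ∀ k < m, f k = g k) :
    wordPrefix f m = wordPrefix g m :=
  List.map_congr_left fun a ha => h a (List.mem_range.mp ha)

@[simp] lemma wordPrefix_length {A : Type*} (f : ℕ → A) (m : ℕ) :
    (wordPrefix f m).length = m := by simp [wordPrefix]

lemma wordPrefix_getD {A : Type*} (f : ℕ → A) {m k : ℕ} (h : k < m) (d : A) :
    (wordPrefix f m).getD k d = f k := by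
  unfold wordPrefix
  rw [List.getD_eq_getElem _ _ (by simpa using h)]; simp

lemma wordPrefix_take {A : Type*} (f : ℕ → A) {m n : ℕ} (h : m ≤ n) :
    (wordPrefix f n).take m = wordPrefix f m := by
  unfold wordPrefix
  rw [← List.map_take, List.take_range, min_eq_left h]

/-- A set of sequences that is determined by the first `m` coordinates is open
in the product of discrete spaces. -/
lemma fd_isOpen {B : Type*} [TopologicalSpace B] [DiscreteTopology B] (m : ℕ)
    (P : Set (ℕ → B)) (h : ∀ y y' : ℕ → B, (∀ k < m, y k = y' k) → y ∈ P → y' ∈ P) :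
    IsOpen P := by
  have hP : P = ⋃ y ∈ P, ⋂ k : Fin m, (fun z : ℕ → B => z (k : ℕ)) ⁻¹' {y (k : ℕ)} := by
    ext z
    simp only [Set.mem_iUnion, Set.mem_iInter, Set.mem_preimage, Set.mem_singleton_iff]
    constructor
    · intro hz; exact ⟨z, hz, fun k => rfl⟩
    · rintro ⟨y, hy, hagree⟩
      exact h y z (fun k hk => (hagree ⟨k, hk⟩).symm) hy
  rw [hP]
  exact isOpen_biUnion fun y _ => isOpen_iInter_of_finite fun k =>
    (continuous_apply (k : ℕ)).isOpen_preimage _ (isOpen_discrete _)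

/-- A set of sequences that is determined by the first `m` coordinates is closed
in the product of discrete spaces. -/
lemma fd_isClosed {B : Type*} [TopologicalSpace B] [DiscreteTopology B] (m : ℕ)
    (P : Set (ℕ → B)) (h : ∀ y y' : ℕ → B, (∀ k < m, y k = y' k) → (y ∈ P ↔ y' ∈ P)) :
    IsClosed P := by
  rw [← isOpen_compl_iff]
  exact fd_isOpen m Pᶜ fun y y' hag hy hy' => hy ((h y y' hag).mpr hy')

variable {S I O : Type*}

/-- There is a trace `σ` that is subset-similar to `ρ` (w.r.t. `π`) up to time `n`,
all of whose prefixes of lengths in `[N, n]` avoid `Φ`. -/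
def QF (T : FinSystem S I O) (π : ℕ → Set I × Set O) (Φ : Set (List (Set I × Set O)))
    (N n : ℕ) (ρ : ℕ → Set I) : Prop :=
  ∃ σ : ℕ → Set I × Set O, IsTrace T σ ∧
    (∀ k < n, ∀ i : I, ((i ∈ (σ k).1) ≠ (i ∈ (π k).1)) → ((i ∈ ρ k) ≠ (i ∈ (π k).1))) ∧
    ∀ m, N ≤ m → m ≤ n → wordPrefix σ m ∉ Φ

variable {T : FinSystem S I O} {π : ℕ → Set I × Set O} {Φ : Set (List (Set I × Set O))}

lemma QF_congr {N n : ℕ} {ρ ρ' : ℕ → Set I} (h : ∀ k < n, ρ k = ρ' k) :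
    QF T π Φ N n ρ ↔ QF T π Φ N n ρ' := by
  constructor <;> rintro ⟨σ, h1, h2, h3⟩ <;> refine ⟨σ, h1, fun k hk i hi => ?_, h3⟩
  · rw [← h k hk]; exact h2 k hk i hi
  · rw [h k hk]; exact h2 k hk i hi

lemma QF_mono {N n n' : ℕ} {ρ : ℕ → Set I} (h : n ≤ n') (hq : QF T π Φ N n' ρ) :
    QF T π Φ N n ρ := by
  obtain ⟨σ, h1, h2, h3⟩ := hq
  exact ⟨σ, h1, fun k hk => h2 k (lt_of_lt_of_le hk h), fun m hm hm' => h3 m hm (hm'.trans h)⟩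

lemma QF_of_lt (hπ : IsTrace T π) {N n : ℕ} {ρ : ℕ → Set I} (h : n < N) :
    QF T π Φ N n ρ :=
  ⟨π, hπ, fun _ _ i hi => absurd rfl hi, fun m hm hm' _ => by omega⟩

lemma QF_of_witness {σ : ℕ → Set I × Set O} {ρ : ℕ → Set I} {N₀ : ℕ}
    (hσ : IsTrace T σ) (hsim : SubsetSim π σ ρ)
    (hav : ∀ m, N₀ ≤ m → wordPrefix σ m ∉ Φ) {N n : ℕ} (hN : N₀ ≤ N) :
    QF T π Φ N n ρ :=
  ⟨σ, hσ, fun k _ => hsim k, fun m hm _ => hav m (hN.trans hm)⟩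

/-- König's lemma / compactness: if `QF N n ρ` holds for all `n`, there is a single
trace similar to `ρ` all of whose prefixes of length `≥ N` avoid `Φ`. -/
lemma QF_koenig [Fintype S] [Fintype I] [Fintype O] {N : ℕ} {ρ : ℕ → Set I}
    (h : ∀ n, QF T π Φ N n ρ) :
    ∃ σ : ℕ → Set I × Set O, IsTrace T σ ∧ SubsetSim π σ ρ ∧
      ∀ m, N ≤ m → wordPrefix σ m ∉ Φ := by
  letI : TopologicalSpace ((Set I × Set O) × S) := ⊥
  haveI : DiscreteTopology ((Set I × Set O) × S) := ⟨rfl⟩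
  let Y := ℕ → ((Set I × Set O) × S)
  let F : ℕ → Set Y := fun n => { y |
    ((y 0).2 = T.init ∧
      ∀ k, (y (k+1)).2 ∈ T.tr ((y k).2) ((y k).1).1 ∧ ((y k).1).2 = T.lab ((y (k+1)).2)) ∧
    ((∀ k < n, ∀ i : I, ((i ∈ ((y k).1).1) ≠ (i ∈ (π k).1)) → ((i ∈ ρ k) ≠ (i ∈ (π k).1))) ∧
      ∀ m, N ≤ m → m ≤ n → wordPrefix (fun k => (y k).1) m ∉ Φ) }
  have hclosed : ∀ n, IsClosed (F n) := by
    intro n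
    have hFn : F n = ({y : Y | (y 0).2 = T.init} ∩
        ⋂ k, {y : Y | (y (k+1)).2 ∈ T.tr ((y k).2) ((y k).1).1 ∧
          ((y k).1).2 = T.lab ((y (k+1)).2)}) ∩
        {y : Y | (∀ k < n, ∀ i : I, ((i ∈ ((y k).1).1) ≠ (i ∈ (π k).1)) →
            ((i ∈ ρ k) ≠ (i ∈ (π k).1))) ∧
          ∀ m, N ≤ m → m ≤ n → wordPrefix (fun k => (y k).1) m ∉ Φ} := by
      ext y
      simp only [F, Set.mem_setOf_eq, Set.mem_inter_iff, Set.mem_iInter]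
    rw [hFn]
    refine IsClosed.inter (IsClosed.inter ?_ (isClosed_iInter fun k => ?_)) ?_
    · refine fd_isClosed 1 _ fun y y' hag => ?_
      show (y 0).2 = T.init ↔ (y' 0).2 = T.init
      rw [hag 0 (by omega)]
    · refine fd_isClosed (k + 2) _ fun y y' hag => ?_
      show (_ ∧ _) ↔ (_ ∧ _)
      simp only [hag k (by omega), hag (k+1) (by omega)]
    · refine fd_isClosed n _ fun y y' hag => ?_
      have hpre : ∀ m ≤ n, wordPrefix (fun k => (y k).1) m = wordPrefix (fun k => (y' k).1) m :=
        fun m hm => wordPrefix_congr m fun k hk => by rw [hag k (by omega)]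
      show (_ ∧ _) ↔ (_ ∧ _)
      constructor
      · rintro ⟨h1, h2⟩
        refine ⟨fun k hk i hi => h1 k hk i (by rw [hag k hk]; exact hi),
          fun m hm hm' hmem => h2 m hm hm' (by rw [hpre m hm']; exact hmem)⟩
      · rintro ⟨h1, h2⟩
        refine ⟨fun k hk i hi => h1 k hk i (by rw [← hag k hk]; exact hi),
          fun m hm hm' hmem => h2 m hm hm' (by rw [← hpre m hm']; exact hmem)⟩
  have hdec : ∀ n, F (n + 1) ⊆ F n := by
    rintro n y ⟨h1, h2, h3⟩
    exact ⟨h1, fun k hk => h2 k (by omega), fun m hm hm' => h3 m hm (by omega)⟩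
  have hne : ∀ n, (F n).Nonempty := by
    intro n
    obtain ⟨σ, ⟨s, hs0, hstep⟩, hsim, hav⟩ := h n
    exact ⟨fun k => (σ k, s k), ⟨hs0, fun k => hstep k⟩, hsim, hav⟩
  haveI : CompactSpace ((Set I × Set O) × S) := Finite.compactSpace
  obtain ⟨y, hy⟩ := IsCompact.nonempty_iInter_of_sequence_nonempty_isCompact_isClosed
    F hdec hne ((hclosed 0).isCompact) hclosed
  simp only [Set.mem_iInter] at hy
  refine ⟨fun k => (y k).1, ⟨fun k => (y k).2, (hy 0).1.1, fun k => (hy 0).1.2 k⟩,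
    fun n i hi => (hy (n+1)).2.1 n (by omega) i hi,
    fun m hm => (hy m).2.2 m hm le_rfl⟩

/-- The list version of `QF`. -/
def QL (T : FinSystem S I O) (π : ℕ → Set I × Set O) (Φ : Set (List (Set I × Set O)))
    (N : ℕ) (w : List (Set I)) : Prop :=
  QF T π Φ N w.length (fun k => w.getD k ∅)

lemma QL_wordPrefix {N n : ℕ} {ρ : ℕ → Set I} :
    QL T π Φ N (wordPrefix ρ n) ↔ QF T π Φ N n ρ := by
  unfold QL
  rw [wordPrefix_length]
  exact QF_congr fun k hk => wordPrefix_getD ρ hk ∅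

/-- The candidate recurrence kernel for the cause. -/
def PhiC (T : FinSystem S I O) (π : ℕ → Set I × Set O) (Φ : Set (List (Set I × Set O))) :
    Set (List (Set I)) :=
  {w | ∃ N, ¬ QL T π Φ N w ∧ ∀ m < w.length, QL T π Φ N (w.take m)}

end Aux
/-- If the effect is a recurrence property, then its cause is a recurrence property. -/
theorem cause_recurrence {S I O : Type*} [Fintype S] [Fintype I] [Fintype O]
    (T : FinSystem S I O) (π : ℕ → Set I × Set O) (hπ : IsTrace T π)
    (E : Set (ℕ → Set I × Set O)) (C : Set (ℕ → Set I)) (hC : IsCause T π E C)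
    (hE : IsRecurrenceProperty E) : IsRecurrenceProperty C := by
  classical
  obtain ⟨Φ, hΦ⟩ := hE
  subst hΦ
  set E : Set (ℕ → Set I × Set O) := {σ | {n : ℕ | wordPrefix σ n ∈ Φ}.Infinite} with hE
  -- the canonical description of the cause
  set D : Set (ℕ → Set I) := {ρ | ∀ σ, IsTrace T σ → SubsetSim π σ ρ → σ ∈ E} with hD
  have hDC : D ⊆ C := by
    intro ρ hρ
    by_contra hρC
    obtain ⟨σ, h1, h2, h3⟩ := hC.2.1 ρ hρC
    exact h3 (hρ σ h1 h2)
  have hsat : SatCond T π E D := by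
    intro π' h1 h2
    refine ⟨?_, (hC.1 π' h1 h2).2⟩
    intro σ hσ hsim
    have hin : traceInputs σ = traceInputs π := by
      funext n
      ext i
      by_contra hne
      have hne' : (i ∈ (σ n).1) ≠ (i ∈ (π n).1) := fun he => hne (iff_of_eq he)
      have h3 := hsim n i hne'
      rw [h2] at h3
      exact h3 rfl
    exact (hC.1 σ hσ hin).2
  have hcf : CfCond T π E D := by
    intro ρ hρ
    simp only [hD, Set.mem_setOf_eq] at hρ
    push_neg at hρ
    exact hρ
  have hCD : C = D := by
    by_contra hne
    exact hC.2.2 ⟨D, ssubset_of_subset_of_ne hDC (fun h => hne h.symm), hsat, hcf⟩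
  refine ⟨PhiC T π Φ, ?_⟩
  rw [hCD]
  ext ρ
  simp only [hD, Set.mem_setOf_eq]
  constructor
  · -- ρ ∈ D → infinitely many prefixes in PhiC
    intro hρ
    apply Set.infinite_of_forall_exists_gt
    intro a
    have hex : ∃ n, ¬ QF T π Φ (a + 1) n ρ := by
      by_contra hq
      push_neg at hq
      obtain ⟨σ, hσ, hsim, hav⟩ := QF_koenig hq
      have hσE : σ ∈ E := hρ σ hσ hsim
      obtain ⟨b, hb, hab⟩ := hσE.exists_gt a
      exact hav b (by omega) hb
    refine ⟨Nat.find hex, ?_, ?_⟩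
    · refine ⟨a + 1, ?_, ?_⟩
      · rw [QL_wordPrefix]
        exact Nat.find_spec hex
      · intro m hm
        rw [wordPrefix_length] at hm
        rw [wordPrefix_take ρ hm.le, QL_wordPrefix]
        exact of_not_not (Nat.find_min hex hm)
    · by_contra hle
      push_neg at hle
      exact Nat.find_spec hex (QF_of_lt hπ (by omega))
  · -- infinitely many prefixes in PhiC → ρ ∈ D
    intro hinf σ hσ hsim
    by_contra hσE
    have hfin : {m | wordPrefix σ m ∈ Φ}.Finite := Set.not_infinite.mp hσE
    obtain ⟨b, hb⟩ := hfin.bddAbove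
    have hav : ∀ m, b + 1 ≤ m → wordPrefix σ m ∉ Φ := fun m hm hmem => by
      have := hb hmem; omega
    have hQ : ∀ N, b + 1 ≤ N → ∀ n, QF T π Φ N n ρ :=
      fun N hN n => QF_of_witness hσ hsim hav hN
    have hsub : {n | wordPrefix ρ n ∈ PhiC T π Φ} ⊆
        ⋃ N ∈ Set.Iio (b + 1), {n | ¬ QF T π Φ N n ρ ∧ ∀ m < n, QF T π Φ N m ρ} := by
      intro n hn
      obtain ⟨N, h1, h2⟩ := hn
      rw [QL_wordPrefix] at h1
      have h2' : ∀ m < n, QF T π Φ N m ρ := by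
        intro m hm
        have := h2 m (by rw [wordPrefix_length]; exact hm)
        rwa [wordPrefix_take ρ hm.le, QL_wordPrefix] at this
      have hN : N < b + 1 := by
        by_contra hge
        exact h1 (hQ N (by omega) n)
      exact Set.mem_biUnion hN ⟨h1, h2'⟩
    have hUinf : (⋃ N ∈ Set.Iio (b + 1),
        {n | ¬ QF T π Φ N n ρ ∧ ∀ m < n, QF T π Φ N m ρ}).Infinite := hinf.mono hsub
    obtain ⟨N, -, hSinf⟩ : ∃ N ∈ Set.Iio (b + 1),
        {n | ¬ QF T π Φ N n ρ ∧ ∀ m < n, QF T π Φ N m ρ}.Infinite := by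
      by_contra hall
      push_neg at hall
      exact hUinf ((Set.finite_Iio (b + 1)).biUnion hall)
    obtain ⟨n₁, hn₁⟩ := hSinf.nonempty
    obtain ⟨n₂, hn₂, hlt⟩ := hSinf.exists_gt n₁
    exact hn₁.1 (hn₂.2 n₁ hlt)
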